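/- Approximation from above of bounded continuous functions by put portfolios: Let μ be a Borel probability measure on ℝ₊ with finite first moment, f : ℝ₊ → ℝ continuous and bounded, and ε > 0. Then there exist m ∈ ℕ, real numbers a₀, a₁,…,a_m and strikes K₁,…,K_m ≥ 0 such that the function u(s) = a₀ + Σ_{j=1}^m a_j (K_j − s)⁺ satisfies u(s) ≥ f(s) for all s ∈ ℝ₊ and ∫ (u − f) dμ < ε. -/

import Mathlib

open MeasureTheory Set Filter Topology
open scoped ENNReal NNReal Classical

noncomputable section

namespace RobustFin

/-- Canonical path space: the values `S₀, S₁, …, S_n` of the asset. -/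
abbrev Path (n : ℕ) := Fin (n + 1) → ℝ

/-- Paths starting at `s₀` with nonnegative coordinates: the canonical space `Ω`. -/
def Omega (n : ℕ) (s₀ : ℝ) : Set (Path n) := {ω | ω 0 = s₀ ∧ ∀ i, 0 ≤ ω i}

/-- The first `j` coordinates `S₁, …, S_j` of a path. -/
def restr {n : ℕ} (j : Fin n) (ω : Path n) : Fin j → ℝ :=
  fun i => ω ⟨(i : ℕ) + 1, by have h1 := i.isLt; have h2 := j.isLt; omega⟩

/-- The coordinates `S₁, …, S_n` of a path. -/
def tailCoords {n : ℕ} (ω : Path n) : Fin n → ℝ := fun i => ω i.succ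

/-- A dynamic trading strategy: bounded measurable positions `Δ_j(S₁,…,S_j)`. -/
structure Dyn (n : ℕ) where
  pos : (j : Fin n) → (Fin j → ℝ) → ℝ
  meas : ∀ j, Measurable (pos j)
  bdd : ∀ j, ∃ C, ∀ x, |pos j x| ≤ C

/-- No short selling: all dynamic positions are nonnegative. -/
def Dyn.Nonneg {n : ℕ} (D : Dyn n) : Prop := ∀ j x, 0 ≤ D.pos j x

/-- Gains from dynamic trading: `Σ_j Δ_j(S₁,…,S_j)(S_{j+1} − S_j)`. -/
def Dyn.gains {n : ℕ} (D : Dyn n) (ω : Path n) : ℝ :=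
  ∑ j : Fin n, D.pos j (restr j ω) * (ω j.succ - ω j.castSucc)

/-- A static option portfolio: a constant (cash) position plus a finite linear
combination of options with maturity indices `idx` and nonnegative strikes. -/
structure Static (n : ℕ) where
  const : ℝ
  m : ℕ
  coeff : Fin m → ℝ
  idx : Fin m → Fin n
  strike : Fin m → ℝ
  strike_nonneg : ∀ k, 0 ≤ strike k

/-- Payoff of the portfolio when the options are call options. -/
def Static.callPayoff {n : ℕ} (X : Static n) (ω : Path n) : ℝ :=
  X.const + ∑ k, X.coeff k * max (ω (X.idx k).succ - X.strike k) 0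

/-- Payoff of the portfolio when the options are put options. -/
def Static.putPayoff {n : ℕ} (X : Static n) (ω : Path n) : ℝ :=
  X.const + ∑ k, X.coeff k * max (X.strike k - ω (X.idx k).succ) 0

/-- Price of a static portfolio, given the unit option prices `c i K`;
this is the (unique) linear pricing functional determined by the prices. -/
def Static.price {n : ℕ} (X : Static n) (c : Fin n → ℝ → ℝ) : ℝ :=
  X.const + ∑ k, X.coeff k * c (X.idx k) (X.strike k)

/-- Expectation of a real payoff, valued in `EReal`, with the convention
`∞ − ∞ = −∞` (in `EReal`, `⊤ - ⊤ = ⊥`). -/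
def eexp {n : ℕ} (P : Measure (Path n)) (f : Path n → ℝ) : EReal :=
  ((∫⁻ ω, ENNReal.ofReal (f ω) ∂P : ℝ≥0∞) : EReal) -
    ((∫⁻ ω, ENNReal.ofReal (-(f ω)) ∂P : ℝ≥0∞) : EReal)

/-- The positive part of an extended real number, in `ℝ≥0∞`. -/
def posE (x : EReal) : ℝ≥0∞ := if x = ⊤ then ⊤ else ENNReal.ofReal x.toReal

/-- Expectation of an `EReal`-valued payoff, with the convention `∞ − ∞ = −∞`. -/
def eexpE {n : ℕ} (P : Measure (Path n)) (f : Path n → EReal) : EReal :=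
  ((∫⁻ ω, posE (f ω) ∂P : ℝ≥0∞) : EReal) - ((∫⁻ ω, posE (-(f ω)) ∂P : ℝ≥0∞) : EReal)

/-- A market calibrated model for the market with static payoffs `pay` (calls or puts),
prices `c` and prediction set `P`. -/
def Calibrated {n : ℕ} (pay : Static n → Path n → ℝ) (c : Fin n → ℝ → ℝ)
    (P : Set (Path n)) (Q : Measure (Path n)) : Prop :=
  IsProbabilityMeasure Q ∧ Q P = 1 ∧
    ∀ (X : Static n) (D : Dyn n), D.Nonneg →
      eexp Q (fun ω => pay X ω + D.gains ω) ≤ (X.price c : EReal)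

/-- A weak free lunch with vanishing risk. -/
def WFLVR {n : ℕ} (pay : Static n → Path n → ℝ) (c : Fin n → ℝ → ℝ)
    (P : Set (Path n)) : Prop :=
  ∃ (Xs : ℕ → Static n) (Ds : ℕ → Dyn n) (X : Static n) (D : Dyn n) (L : ℝ),
    (∀ k, (Ds k).Nonneg) ∧ D.Nonneg ∧
    (∀ ω ∈ P, Tendsto (fun k => pay (Xs k) ω + (Ds k).gains ω) atTop (nhds 0)) ∧
    (∀ k, ∀ ω ∈ P, pay X ω + D.gains ω ≤ pay (Xs k) ω + (Ds k).gains ω) ∧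
    Tendsto (fun k => (Xs k).price c) atTop (nhds L) ∧ L < 0

/-- A robust uniformly strong arbitrage. -/
def RobustArbitrage {n : ℕ} (pay : Static n → Path n → ℝ) (c : Fin n → ℝ → ℝ)
    (P : Set (Path n)) : Prop :=
  ∃ (X : Static n) (D : Dyn n), D.Nonneg ∧ X.price c < 0 ∧
    ∀ ω ∈ P, 0 ≤ pay X ω + D.gains ω

/-- The superhedging price of `G` over semi-static strategies (no short selling). -/
def V {n : ℕ} (pay : Static n → Path n → ℝ) (c : Fin n → ℝ → ℝ)
    (P : Set (Path n)) (G : Path n → EReal) : EReal :=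
  sInf {q : EReal | ∃ (X : Static n) (D : Dyn n), D.Nonneg ∧ q = (X.price c : EReal) ∧
    ∀ ω ∈ P, G ω ≤ ((pay X ω + D.gains ω : ℝ) : EReal)}

/-- The superhedging price of `G` when the dynamic positions may take both signs. -/
def Vsigned {n : ℕ} (pay : Static n → Path n → ℝ) (c : Fin n → ℝ → ℝ)
    (P : Set (Path n)) (G : Path n → EReal) : EReal :=
  sInf {q : EReal | ∃ (X : Static n) (D : Dyn n), q = (X.price c : EReal) ∧
    ∀ ω ∈ P, G ω ≤ ((pay X ω + D.gains ω : ℝ) : EReal)}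

/-- `Π_μ`: probability measures on the path space with marginals `δ_{s₀}, μ₁, …, μ_n`. -/
def PiMu {n : ℕ} (s₀ : ℝ) (μ : Fin n → Measure ℝ) : Set (Measure (Path n)) :=
  {π | IsProbabilityMeasure π ∧ π (Omega n s₀) = 1 ∧
       ∀ i : Fin n, π.map (fun ω => ω i.succ) = μ i}

/-- The coordinate process is a supermartingale in its natural filtration:
for every Borel `A ⊆ ℝ₊^j`, `∫ 1_A(S₁,…,S_j)(S_{j+1} − S_j) dπ ≤ 0`. -/
def IsSupermartingaleLaw {n : ℕ} (π : Measure (Path n)) : Prop :=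
  ∀ (j : Fin n) (A : Set (Fin j → ℝ)), MeasurableSet A →
    ∫ ω, Set.indicator A (fun _ => (1 : ℝ)) (restr j ω) * (ω j.succ - ω j.castSucc) ∂π ≤ 0

/-- `M⁻_μ`: calibrated supermartingale measures. -/
def MSet {n : ℕ} (s₀ : ℝ) (μ : Fin n → Measure ℝ) : Set (Measure (Path n)) :=
  {π ∈ PiMu s₀ μ | IsSupermartingaleLaw π}

/-- `M⁻_{μ,𝔓}`: calibrated supermartingale measures giving full mass to `P`. -/
def MSetP {n : ℕ} (s₀ : ℝ) (μ : Fin n → Measure ℝ) (P : Set (Path n)) :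
    Set (Measure (Path n)) :=
  {π ∈ MSet s₀ μ | π P = 1}

/-- Assumption A on the marginals. -/
def AssumptionA {n : ℕ} (s₀ : ℝ) (μ : Fin n → Measure ℝ) : Prop :=
  (∀ i, ∫ x, x ∂(μ i) ≤ s₀) ∧
  (∀ i j : Fin n, i ≤ j → ∫ x, x ∂(μ j) ≤ ∫ x, x ∂(μ i)) ∧
  (∀ φ : ℝ → ℝ, ConcaveOn ℝ Set.univ φ → Monotone φ → (∀ x, 0 ≤ φ x) →
    ∀ i j : Fin n, i ≤ j → ∫ x, φ x ∂(μ j) ≤ ∫ x, φ x ∂(μ i))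

/-- Condition C (i): each `c_i` is nonnegative, convex and nonincreasing on `ℝ₊`. -/
def CondC1 {n : ℕ} (c : Fin n → ℝ → ℝ) : Prop :=
  ∀ i, (∀ x, 0 ≤ x → 0 ≤ c i x) ∧ ConvexOn ℝ (Set.Ici 0) (c i) ∧ AntitoneOn (c i) (Set.Ici 0)

/-- Condition C (ii): `s₀ ≥ c₁(0) ≥ … ≥ c_n(0) ≥ 0` and `c_i'(0+) ≥ −1`
(the latter expressed, for convex `c_i`, through the slopes at `0`). -/
def CondC2 {n : ℕ} (s₀ : ℝ) (c : Fin n → ℝ → ℝ) : Prop :=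
  (∀ i, c i 0 ≤ s₀) ∧ (∀ i j : Fin n, i ≤ j → c j 0 ≤ c i 0) ∧ (∀ i, 0 ≤ c i 0) ∧
    (∀ i, ∀ K : ℝ, 0 < K → c i 0 - K ≤ c i K)

/-- Condition C (iii): `c_i(K) → 0` as `K → ∞`. -/
def CondC3 {n : ℕ} (c : Fin n → ℝ → ℝ) : Prop :=
  ∀ i, Tendsto (c i) atTop (nhds 0)

/-- Condition C (iv): for every `x ≥ 0`, `c_i(0) − c_i(x)` is nonincreasing in `i`. -/
def CondC4 {n : ℕ} (c : Fin n → ℝ → ℝ) : Prop :=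
  ∀ x : ℝ, 0 ≤ x → ∀ i j : Fin n, i ≤ j → c j 0 - c j x ≤ c i 0 - c i x

/-- Condition C. -/
def CondC {n : ℕ} (s₀ : ℝ) (c : Fin n → ℝ → ℝ) : Prop :=
  CondC1 c ∧ CondC2 s₀ c ∧ CondC3 c ∧ CondC4 c

/-- Condition P (i). -/
def CondP1 {n : ℕ} (p : Fin n → ℝ → ℝ) : Prop :=
  ∀ i, (∀ x, 0 ≤ x → 0 ≤ p i x) ∧ ConvexOn ℝ (Set.Ici 0) (p i) ∧ MonotoneOn (p i) (Set.Ici 0)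

/-- Condition P (ii): `s₀ ≥ lim (x − p₁(x)) ≥ … ≥ 0` and `0 ≤ p_i'(0+) ≤ 1`. -/
def CondP2 {n : ℕ} (s₀ : ℝ) (p : Fin n → ℝ → ℝ) : Prop :=
  (∃ L : Fin n → ℝ,
    (∀ i, Tendsto (fun x => x - p i x) atTop (nhds (L i))) ∧
    (∀ i, L i ≤ s₀) ∧ (∀ i j : Fin n, i ≤ j → L j ≤ L i) ∧ (∀ i, 0 ≤ L i)) ∧
  (∃ d : Fin n → ℝ,
    (∀ i, Tendsto (fun K => (p i K - p i 0) / K) (nhdsWithin 0 (Set.Ioi 0)) (nhds (d i))) ∧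
    (∀ i, 0 ≤ d i ∧ d i ≤ 1))

/-- Condition P (iii): `p_i(K) → 0` as `K → 0` (within `ℝ₊`). -/
def CondP3 {n : ℕ} (p : Fin n → ℝ → ℝ) : Prop :=
  ∀ i, Tendsto (p i) (nhdsWithin 0 (Set.Ici 0)) (nhds 0)

/-- Condition P (iv): `p_i(x)` is nondecreasing in `i`. -/
def CondP4 {n : ℕ} (p : Fin n → ℝ → ℝ) : Prop :=
  ∀ x : ℝ, 0 ≤ x → ∀ i j : Fin n, i ≤ j → p i x ≤ p j x

/-- Condition P. -/
def CondP {n : ℕ} (s₀ : ℝ) (p : Fin n → ℝ → ℝ) : Prop :=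
  CondP1 p ∧ CondP2 s₀ p ∧ CondP3 p ∧ CondP4 p

/-- The measures `μ_i` defined from the put prices by `μ_i([0,K]) = p_i'(K)`;
equivalently, `p_i(K) = ∫ (K − x)⁺ μ_i(dx)`. -/
def PutPricesFrom {n : ℕ} (p : Fin n → ℝ → ℝ) (μ : Fin n → Measure ℝ) : Prop :=
  (∀ i, IsProbabilityMeasure (μ i)) ∧ (∀ i, μ i (Set.Iio 0) = 0) ∧
  (∀ i, Integrable (fun x => x) (μ i)) ∧
  (∀ i, ∀ K : ℝ, 0 ≤ K → p i K = ∫ x, max (K - x) 0 ∂(μ i))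

/-- The path `(s₀, s₁, …, s_i, x, s_{i+2}, …, s_n)`. -/
def mkPath {n : ℕ} (s₀ : ℝ) (i : Fin n) (s : Fin i → ℝ) (x : ℝ)
    (t : Fin (n - ((i : ℕ) + 1)) → ℝ) : Path n := fun j =>
  if h0 : (j : ℕ) = 0 then s₀
  else if h1 : (j : ℕ) ≤ (i : ℕ) then
    s ⟨(j : ℕ) - 1, by have := j.isLt; have := i.isLt; omega⟩
  else if h2 : (j : ℕ) = (i : ℕ) + 1 then x
  else t ⟨(j : ℕ) - (i : ℕ) - 2, by have := j.isLt; have := i.isLt; omega⟩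

/-- The family `β_i : ℝ₊^i → ℝ` defined recursively by `β_n = 0` and
`β_i(s₁,…,s_i) = (sup_{s_{i+2},…,s_n} limsup_{x→∞} ((β_{i+1}(s₁,…,s_i,x)
 + G(s₁,…,s_i,x,s_{i+2},…,s_n)/x)·1_𝔓)) ∨ 0`. -/
def IsBetaFamily {n : ℕ} (s₀ : ℝ) (P : Set (Path n)) (G : (Fin n → ℝ) → EReal)
    (β : (i : Fin (n + 1)) → (Fin i → ℝ) → ℝ) : Prop :=
  (∀ s, β (Fin.last n) s = 0) ∧
  ∀ (i : Fin n) (s : Fin i → ℝ), (∀ k, 0 ≤ s k) →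
    (β ⟨(i : ℕ), by have := i.isLt; omega⟩ s : EReal) =
      max 0 (⨆ (t : Fin (n - ((i : ℕ) + 1)) → ℝ) (_ : ∀ k, 0 ≤ t k),
        Filter.limsup (fun x : ℝ =>
          if mkPath s₀ i s x t ∈ P then
            ((β ⟨(i : ℕ) + 1, by have := i.isLt; omega⟩ (Fin.snoc s x) : ℝ) : EReal)
              + G (tailCoords (mkPath s₀ i s x t)) * ((x⁻¹ : ℝ) : EReal)
          else 0) Filter.atTop)

/-- Gains of the dynamic strategy `(β_i)`: `β₀(S₁ − s₀) + Σ_i β_i(S₁,…,S_i)(S_{i+1} − S_i)`. -/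
def gainsOf {n : ℕ} (β : (i : Fin (n + 1)) → (Fin i → ℝ) → ℝ) (ω : Path n) : ℝ :=
  ∑ j : Fin n, β ⟨(j : ℕ), by have := j.isLt; omega⟩ (restr j ω) * (ω j.succ - ω j.castSucc)

/-- The penalty function `λ_𝔓(s₁,…,s_n) = (1 + s₁ + … + s_n)·1{(s₁,…,s_n) ∉ 𝔓}`. -/
def lambdaP {n : ℕ} (P : Set (Path n)) (ω : Path n) : ℝ :=
  if ω ∈ P then 0 else 1 + ∑ i : Fin n, ω i.succ

/-- `min(s₀, s₁, …, s_m)`. -/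
def pmin {m : ℕ} (s₀ : ℝ) (s : Fin m → ℝ) : ℝ :=
  Finset.univ.inf' Finset.univ_nonempty
    (fun j : Fin (m + 1) =>
      if h : (j : ℕ) = 0 then s₀ else s ⟨(j : ℕ) - 1, by have := j.isLt; omega⟩)

/-- `max(s₀, s₁, …, s_m)`. -/
def pmax {m : ℕ} (s₀ : ℝ) (s : Fin m → ℝ) : ℝ :=
  Finset.univ.sup' Finset.univ_nonempty
    (fun j : Fin (m + 1) =>
      if h : (j : ℕ) = 0 then s₀ else s ⟨(j : ℕ) - 1, by have := j.isLt; omega⟩)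



private lemma convex_comb_lb (a b θ : ℝ) (h0 : 0 ≤ θ) (h1 : θ ≤ 1) :
    min a b ≤ b - (b - a) * θ := by
  rcases le_total a b with hab | hab
  · rw [min_eq_left hab]; nlinarith
  · rw [min_eq_right hab]; nlinarith

private lemma convex_comb_ub (a b θ : ℝ) (h0 : 0 ≤ θ) (h1 : θ ≤ 1) :
    b - (b - a) * θ ≤ max a b := by
  rcases le_total a b with hab | hab
  · rw [max_eq_right hab]; nlinarith
  · rw [max_eq_left hab]; nlinarith

private lemma sum_delta_eval (v : ℕ → ℝ) (h : ℝ) (hh : 0 < h) (k i : ℕ) (hik : i < k)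
    (s : ℝ) (h1 : (i : ℝ) * h ≤ s) (h2 : s ≤ ((i : ℝ) + 1) * h) :
    ∑ j ∈ Finset.range k, ((v (j+1) - v j)/h) *
        (max (((j:ℝ)+1)*h - s) 0 - max ((j:ℝ)*h - s) 0)
      = (v k - v (i+1)) + ((v (i+1) - v i)/h) * (((i:ℝ)+1)*h - s) := by
  set F : ℕ → ℝ := fun j => ((v (j+1) - v j)/h) *
      (max (((j:ℝ)+1)*h - s) 0 - max ((j:ℝ)*h - s) 0) with hF
  have hik' : i + 1 ≤ k := hik
  rw [Finset.range_eq_Ico, ← Finset.sum_Ico_consecutive F (Nat.zero_le (i+1)) hik',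
    ← Finset.range_eq_Ico, Finset.sum_range_succ]
  have hz : ∑ j ∈ Finset.range i, F j = 0 := by
    refine Finset.sum_eq_zero fun j hj => ?_
    have hji : (j : ℝ) + 1 ≤ (i : ℝ) := by exact_mod_cast Finset.mem_range.mp hj
    have e1 : max (((j:ℝ)+1)*h - s) 0 = 0 := max_eq_right (by nlinarith)
    have e2 : max ((j:ℝ)*h - s) 0 = 0 := max_eq_right (by nlinarith)
    simp [hF, e1, e2]
  have hFi : F i = ((v (i+1) - v i)/h) * (((i:ℝ)+1)*h - s) := by
    have e1 : max (((i:ℝ)+1)*h - s) 0 = ((i:ℝ)+1)*h - s := max_eq_left (by linarith)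
    have e2 : max ((i:ℝ)*h - s) 0 = 0 := max_eq_right (by linarith)
    simp [hF, e1, e2]
  have htel : ∑ j ∈ Finset.Ico (i+1) k, F j = v k - v (i+1) := by
    have hcong : ∑ j ∈ Finset.Ico (i+1) k, F j
        = ∑ j ∈ Finset.Ico (i+1) k, (v (j+1) - v j) := by
      refine Finset.sum_congr rfl fun j hj => ?_
      have hj' : (i : ℝ) + 1 ≤ (j : ℝ) := by exact_mod_cast (Finset.mem_Ico.mp hj).1
      have e1 : max (((j:ℝ)+1)*h - s) 0 = ((j:ℝ)+1)*h - s := max_eq_left (by nlinarith)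
      have e2 : max ((j:ℝ)*h - s) 0 = (j:ℝ)*h - s := max_eq_left (by nlinarith)
      rw [hF]; dsimp only
      rw [e1, e2, show ((j:ℝ)+1)*h - s - ((j:ℝ)*h - s) = h by ring,
        div_mul_cancel₀ _ hh.ne']
    rw [hcong, Finset.sum_Ico_eq_sub _ hik', Finset.sum_range_sub, Finset.sum_range_sub]
    ring
  rw [hz, htel, hFi]; ring

private lemma sum_delta_zero (v : ℕ → ℝ) (h : ℝ) (hh : 0 ≤ h) (k : ℕ) (s : ℝ)
    (hs : (k:ℝ) * h ≤ s) :
    ∑ j ∈ Finset.range k, ((v (j+1) - v j)/h) *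
        (max (((j:ℝ)+1)*h - s) 0 - max ((j:ℝ)*h - s) 0) = 0 := by
  refine Finset.sum_eq_zero fun j hj => ?_
  have hj' : (j:ℝ) + 1 ≤ (k:ℝ) := by exact_mod_cast Finset.mem_range.mp hj
  have h1 : ((j:ℝ)+1)*h ≤ s := le_trans (by nlinarith) hs
  have e1 : max (((j:ℝ)+1)*h - s) 0 = 0 := max_eq_right (by linarith)
  have e2 : max ((j:ℝ)*h - s) 0 = 0 := max_eq_right (by nlinarith)
  rw [e1, e2]; ring

private lemma repr_sum (k : ℕ) (v : ℕ → ℝ) (h s : ℝ) :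
    ∑ j : Fin (k+k),
      (if (j:ℕ) < k then -((v ((j:ℕ)+1) - v (j:ℕ))/h) else (v (((j:ℕ)-k)+1) - v ((j:ℕ)-k))/h)
        * max ((if (j:ℕ) < k then (((j:ℕ):ℝ)+1)*h else ((((j:ℕ)-k : ℕ):ℝ))*h) - s) 0
    = - ∑ j ∈ Finset.range k, ((v (j+1) - v j)/h) *
        (max (((j:ℝ)+1)*h - s) 0 - max ((j:ℝ)*h - s) 0) := by
  rw [Fin.sum_univ_add]
  have e1 : ∀ i : Fin k,
      (if ((Fin.castAdd k i : Fin (k+k)):ℕ) < k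
          then -((v (((Fin.castAdd k i : Fin (k+k)):ℕ)+1) - v ((Fin.castAdd k i : Fin (k+k)):ℕ))/h)
          else (v ((((Fin.castAdd k i : Fin (k+k)):ℕ)-k)+1) - v (((Fin.castAdd k i : Fin (k+k)):ℕ)-k))/h)
        * max ((if ((Fin.castAdd k i : Fin (k+k)):ℕ) < k
            then ((((Fin.castAdd k i : Fin (k+k)):ℕ):ℝ)+1)*h
            else (((((Fin.castAdd k i : Fin (k+k)):ℕ)-k : ℕ):ℝ))*h) - s) 0
      = -(((v ((i:ℕ)+1) - v (i:ℕ))/h) * max ((((i:ℕ):ℝ)+1)*h - s) 0) := by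
    intro i
    have hv : ((Fin.castAdd k i : Fin (k+k)):ℕ) = (i:ℕ) := rfl
    rw [hv, if_pos i.isLt, if_pos i.isLt]; ring
  have e2 : ∀ i : Fin k,
      (if ((Fin.natAdd k i : Fin (k+k)):ℕ) < k
          then -((v (((Fin.natAdd k i : Fin (k+k)):ℕ)+1) - v ((Fin.natAdd k i : Fin (k+k)):ℕ))/h)
          else (v ((((Fin.natAdd k i : Fin (k+k)):ℕ)-k)+1) - v (((Fin.natAdd k i : Fin (k+k)):ℕ)-k))/h)
        * max ((if ((Fin.natAdd k i : Fin (k+k)):ℕ) < k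
            then ((((Fin.natAdd k i : Fin (k+k)):ℕ):ℝ)+1)*h
            else (((((Fin.natAdd k i : Fin (k+k)):ℕ)-k : ℕ):ℝ))*h) - s) 0
      = ((v ((i:ℕ)+1) - v (i:ℕ))/h) * max ((((i:ℕ):ℝ))*h - s) 0 := by
    intro i
    have hv : ((Fin.natAdd k i : Fin (k+k)):ℕ) = k + (i:ℕ) := rfl
    rw [hv, if_neg (by omega), if_neg (by omega), Nat.add_sub_cancel_left]
  rw [Finset.sum_congr rfl (fun i _ => e1 i), Finset.sum_congr rfl (fun i _ => e2 i),
    Fin.sum_univ_eq_sum_range (fun j => -(((v (j+1) - v j)/h) * max (((j:ℝ)+1)*h - s) 0)) k,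
    Fin.sum_univ_eq_sum_range (fun j => ((v (j+1) - v j)/h) * max (((j:ℝ))*h - s) 0) k,
    ← Finset.sum_add_distrib, ← Finset.sum_neg_distrib]
  exact Finset.sum_congr rfl fun j _ => by ring

/-- approximation from above of bounded continuous functions by
put portfolios: for a probability measure `μ` on `ℝ₊` with finite first moment,
any bounded continuous `f` and `ε > 0`, there is a put portfolio
`u(s) = a₀ + Σ a_j (K_j − s)⁺` with `u ≥ f` on `ℝ₊` and `∫ (u − f) dμ < ε`. -/
theorem put_portfolio_approximation
    (μ : Measure ℝ) (hprob : IsProbabilityMeasure μ) (hsupp : μ (Set.Iio 0) = 0)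
    (hmom : Integrable (fun x => x) μ)
    (f : ℝ → ℝ) (hf : Continuous f) (hfb : ∃ C : ℝ, ∀ x, |f x| ≤ C)
    (ε : ℝ) (hε : 0 < ε) :
    ∃ (m : ℕ) (a₀ : ℝ) (a : Fin m → ℝ) (Ks : Fin m → ℝ),
      (∀ j, 0 ≤ Ks j) ∧
      (∀ s : ℝ, 0 ≤ s → f s ≤ a₀ + ∑ j, a j * max (Ks j - s) 0) ∧
      ∫ x, ((a₀ + ∑ j, a j * max (Ks j - x) 0) - f x) ∂μ < ε := by
  classical
  obtain ⟨C, hC⟩ := hfb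
  have hC0 : 0 ≤ C := le_trans (abs_nonneg (f 0)) (hC 0)
  set ε' : ℝ := ε / 8 with hε'def
  have hε'pos : 0 < ε' := by positivity
  set δ : ℝ := ε / (4 * (2*C + ε' + 1)) with hδdef
  have hδpos : 0 < δ := by positivity
  -- tail smallness
  obtain ⟨N₀, hN₀⟩ : ∃ N₀ : ℕ, μ (Set.Ici (N₀ : ℝ)) < ENNReal.ofReal δ := by
    have hmeas : ∀ m : ℕ, NullMeasurableSet (Set.Ici (m:ℝ)) μ :=
      fun m => measurableSet_Ici.nullMeasurableSet
    have hanti : Antitone (fun m : ℕ => Set.Ici (m:ℝ)) := fun a b hab =>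
      Set.Ici_subset_Ici.mpr (by exact_mod_cast hab)
    have hlim := tendsto_measure_iInter_atTop hmeas hanti ⟨0, measure_ne_top μ _⟩
    have hempty : (⋂ m : ℕ, Set.Ici ((m:ℕ):ℝ)) = (∅ : Set ℝ) := by
      ext x
      simp only [Set.mem_iInter, Set.mem_Ici, Set.mem_empty_iff_false, iff_false,
        not_forall, not_le]
      obtain ⟨m, hm⟩ := exists_nat_gt x
      exact ⟨m, hm⟩
    rw [hempty, measure_empty] at hlim
    have hev := hlim.eventually_lt_const
      (show (0:ℝ≥0∞) < ENNReal.ofReal δ by simpa using hδpos)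
    exact hev.exists
  set M : ℝ := (N₀ : ℝ) + 2 with hMdef
  have hM0 : 0 < M := by positivity
  -- uniform continuity on [0, M]
  have huc : UniformContinuousOn f (Set.Icc 0 M) :=
    (isCompact_Icc).uniformContinuousOn_of_continuous hf.continuousOn
  obtain ⟨du, hdu, hduc⟩ := Metric.uniformContinuousOn_iff.mp huc ε' hε'pos
  -- grid
  obtain ⟨n, hnn⟩ := exists_nat_gt (M / min du 1)
  have hmin : 0 < min du 1 := lt_min hdu one_pos
  have hn0 : (0:ℝ) < (n:ℝ) := lt_trans (by positivity) hnn
  set h : ℝ := M / n with hhdef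
  have hh : 0 < h := by positivity
  have hkh : (n:ℝ) * h = M := by rw [hhdef]; field_simp
  have hhlt : h < min du 1 := by
    rw [hhdef, div_lt_iff₀ hn0]
    calc M = (M / min du 1) * min du 1 := by field_simp
    _ < (n:ℝ) * min du 1 := by exact mul_lt_mul_of_pos_right hnn hmin
    _ = min du 1 * n := mul_comm _ _
  have hhdu : h < du := lt_of_lt_of_le hhlt (min_le_left _ _)
  have hh1 : h ≤ 1 := le_of_lt (lt_of_lt_of_le hhlt (min_le_right _ _))
  set v : ℕ → ℝ := fun j => if j < n then f ((j:ℝ) * h) + ε' else C with hvdef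
  have hvk : v n = C := by simp [hvdef]
  have hvle : ∀ j, v j ≤ C + ε' := by
    intro j
    rw [hvdef]; dsimp only
    split
    · have h1 := hC ((j:ℝ)*h)
      have h2 := le_abs_self (f ((j:ℝ)*h))
      linarith
    · linarith
  set N : ℝ := ((n:ℝ) - 1) * h with hNdef
  have hNM : N = M - h := by rw [hNdef, sub_mul, one_mul, hkh]
  have hN₀N : (N₀:ℝ) ≤ N := by rw [hNM, hMdef]; linarith
  set U : ℝ → ℝ := fun s => C - ∑ j ∈ Finset.range n, ((v (j+1) - v j)/h) *
      (max (((j:ℝ)+1)*h - s) 0 - max ((j:ℝ)*h - s) 0) with hUdef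
  have hUcont : Continuous U := by
    rw [hUdef]
    refine continuous_const.sub (continuous_finset_sum _ fun j _ => continuous_const.mul ?_)
    exact ((continuous_const.sub continuous_id).max continuous_const).sub
      ((continuous_const.sub continuous_id).max continuous_const)
  have hmaster : ∀ s, 0 ≤ s → f s ≤ U s ∧ U s ≤ C + ε' ∧ (s < N → U s ≤ f s + 2*ε') := by
    intro s hs
    by_cases hsk : (n:ℝ) * h ≤ s
    · have hU : U s = C := by
        rw [hUdef]; dsimp only
        rw [sum_delta_zero v h hh.le n s hsk]; ring
      have hfs : f s ≤ C := le_trans (le_abs_self _) (hC s)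
      refine ⟨by rw [hU]; exact hfs, by rw [hU]; linarith, fun hsN => ?_⟩
      exfalso
      rw [hNM] at hsN
      rw [hkh] at hsk
      linarith
    · push_neg at hsk
      set i : ℕ := Nat.floor (s / h) with hidef
      have hsh0 : 0 ≤ s / h := div_nonneg hs hh.le
      have hi1 : (i:ℝ) * h ≤ s := by
        have h1 := Nat.floor_le hsh0
        calc (i:ℝ) * h ≤ (s/h) * h := by
              exact mul_le_mul_of_nonneg_right h1 hh.le
        _ = s := div_mul_cancel₀ s hh.ne'
      have hi2 : s < ((i:ℝ) + 1) * h := by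
        have h1 : s / h < (i:ℝ) + 1 := by exact_mod_cast Nat.lt_floor_add_one (s/h)
        calc s = (s/h)*h := (div_mul_cancel₀ s hh.ne').symm
        _ < ((i:ℝ)+1)*h := by exact mul_lt_mul_of_pos_right h1 hh
      have hik : i < n := by
        have h1 : s / h < (n:ℝ) := by rw [div_lt_iff₀ hh]; linarith [hkh]
        exact (Nat.floor_lt hsh0).mpr (by exact_mod_cast h1)
      have heval := sum_delta_eval v h hh n i hik s hi1 hi2.le
      set θ : ℝ := (((i:ℝ)+1)*h - s)/h with hθdef
      have hθ0 : 0 ≤ θ := div_nonneg (by linarith) hh.le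
      have hθ1 : θ ≤ 1 := by rw [hθdef, div_le_one hh]; linarith
      have hU : U s = v (i+1) - (v (i+1) - v i) * θ := by
        rw [hUdef]; dsimp only
        rw [heval, hvk, hθdef]; ring
      have hlb := convex_comb_lb (v i) (v (i+1)) θ hθ0 hθ1
      have hub := convex_comb_ub (v i) (v (i+1)) θ hθ0 hθ1
      have hsM : s ∈ Set.Icc (0:ℝ) M := ⟨hs, by rw [← hkh]; linarith⟩
      have hiM : (i:ℝ)*h ∈ Set.Icc (0:ℝ) M := ⟨by positivity, le_trans hi1 hsM.2⟩
      have hexp : ((i:ℝ)+1)*h = (i:ℝ)*h + h := by ring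
      have hdi : dist s ((i:ℝ)*h) < du := by
        rw [Real.dist_eq, abs_of_nonneg (by linarith)]
        rw [hexp] at hi2
        linarith
      have hfi := hduc s hsM ((i:ℝ)*h) hiM hdi
      rw [Real.dist_eq, abs_lt] at hfi
      have hvi : v i = f ((i:ℝ)*h) + ε' := by
        rw [hvdef]; dsimp only; rw [if_pos hik]
      by_cases hik1 : i + 1 < n
      · have hvi1 : v (i+1) = f (((i:ℝ)+1)*h) + ε' := by
          rw [hvdef]; dsimp only; rw [if_pos hik1]; push_cast; ring_nf
        have hi1M : ((i:ℝ)+1)*h ∈ Set.Icc (0:ℝ) M := by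
          refine ⟨by positivity, ?_⟩
          have h1 : ((i:ℝ)+1) ≤ (n:ℝ) := by exact_mod_cast Nat.le_of_lt hik1
          rw [← hkh]
          exact mul_le_mul_of_nonneg_right h1 hh.le
        have hdi1 : dist s (((i:ℝ)+1)*h) < du := by
          rw [Real.dist_eq, abs_of_nonpos (by linarith)]
          rw [hexp] at hi2 ⊢
          linarith
        have hfi1 := hduc s hsM (((i:ℝ)+1)*h) hi1M hdi1
        rw [Real.dist_eq, abs_lt] at hfi1
        refine ⟨?_, ?_, fun _ => ?_⟩
        · calc f s ≤ min (v i) (v (i+1)) :=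
                le_min (by rw [hvi]; linarith) (by rw [hvi1]; linarith)
          _ ≤ U s := by rw [hU]; exact hlb
        · rw [hU]; exact le_trans hub (max_le (hvle i) (hvle (i+1)))
        · rw [hU]
          refine le_trans hub (max_le ?_ ?_)
          · rw [hvi]; linarith
          · rw [hvi1]; linarith
      · have hieq : i + 1 = n := by omega
        have hvi1 : v (i+1) = C := by rw [hieq, hvk]
        have hfs : f s ≤ C := le_trans (le_abs_self _) (hC s)
        refine ⟨?_, ?_, fun hsN => ?_⟩
        · calc f s ≤ min (v i) (v (i+1)) :=
                le_min (by rw [hvi]; linarith) (by rw [hvi1]; linarith)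
          _ ≤ U s := by rw [hU]; exact hlb
        · rw [hU]; exact le_trans hub (max_le (hvle i) (hvle (i+1)))
        · exfalso
          have hcast : (i:ℝ) = (n:ℝ) - 1 := by
            have : ((i:ℕ):ℝ) + 1 = ((n:ℕ):ℝ) := by exact_mod_cast congrArg (Nat.cast (R := ℝ)) hieq
            linarith
          rw [hNdef, ← hcast] at hsN
          linarith
  -- the witnesses
  refine ⟨n + n, C,
    fun j => if (j:ℕ) < n then -((v ((j:ℕ)+1) - v (j:ℕ))/h) else (v (((j:ℕ)-n)+1) - v ((j:ℕ)-n))/h,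
    fun j => if (j:ℕ) < n then (((j:ℕ):ℝ)+1)*h else ((((j:ℕ)-n : ℕ):ℝ))*h,
    ?_, ?_, ?_⟩
  · intro j
    dsimp only
    split <;> positivity
  · intro s hs
    have hr := repr_sum n v h s
    rw [hr]
    have := (hmaster s hs).1
    rw [hUdef] at this
    linarith [this]
  · have hcong : (fun x => ((C + ∑ j : Fin (n+n),
        (if (j:ℕ) < n then -((v ((j:ℕ)+1) - v (j:ℕ))/h) else (v (((j:ℕ)-n)+1) - v ((j:ℕ)-n))/h)
          * max ((if (j:ℕ) < n then (((j:ℕ):ℝ)+1)*h else ((((j:ℕ)-n : ℕ):ℝ))*h) - x) 0) - f x))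
        = fun x => U x - f x := by
      funext x
      rw [repr_sum n v h x]
      simp only [hUdef]
      ring
    rw [hcong]
    have hae0 : ∀ᵐ x ∂μ, (0:ℝ) ≤ x := by
      have hset : {x : ℝ | ¬ (0:ℝ) ≤ x} = Set.Iio 0 := by ext x; simp [not_le]
      rw [ae_iff, hset]
      exact hsupp
    have hintInd : Integrable (Set.indicator (Set.Ici N) (fun _ => 2*C + ε')) μ :=
      (integrable_indicator_iff measurableSet_Ici).mpr
        ((integrableOn_const_iff).mpr (Or.inr (measure_lt_top μ _)))
    have hintB : Integrable (fun x => 2*ε' + Set.indicator (Set.Ici N) (fun _ => 2*C + ε') x) μ :=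
      (integrable_const _).add hintInd
    have hintUf : Integrable (fun x => U x - f x) μ := by
      refine Integrable.mono' (integrable_const (2*C + 2*ε'))
        ((hUcont.sub hf).aestronglyMeasurable) ?_
      filter_upwards [hae0] with x hx
      obtain ⟨h1, h2, _⟩ := hmaster x hx
      have h4 := abs_le.mp (hC x)
      rw [Real.norm_eq_abs, abs_le]
      constructor <;> linarith
    have hle : ∀ᵐ x ∂μ, U x - f x ≤ 2*ε' + Set.indicator (Set.Ici N) (fun _ => 2*C + ε') x := by
      filter_upwards [hae0] with x hx
      obtain ⟨h1, h2, h3⟩ := hmaster x hx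
      have h4 := abs_le.mp (hC x)
      by_cases hxN : x ∈ Set.Ici N
      · rw [Set.indicator_of_mem hxN]; linarith
      · rw [Set.indicator_of_notMem hxN]
        have hxN' : x < N := not_le.mp (by simpa using hxN)
        linarith [h3 hxN']
    have hIB : ∫ x, (2*ε' + Set.indicator (Set.Ici N) (fun _ => 2*C + ε') x) ∂μ
        = 2*ε' + (2*C + ε') * (μ (Set.Ici N)).toReal := by
      rw [integral_add (integrable_const _) hintInd, integral_const,
        integral_indicator_const _ measurableSet_Ici]
      simp [measure_univ, smul_eq_mul]
      rw [measureReal_def]; ring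
    have htail : (μ (Set.Ici N)).toReal < δ := by
      have h1 : μ (Set.Ici N) ≤ μ (Set.Ici ((N₀:ℕ):ℝ)) :=
        measure_mono (Set.Ici_subset_Ici.mpr hN₀N)
      exact ENNReal.toReal_lt_of_lt_ofReal (lt_of_le_of_lt h1 hN₀)
    have ht0 : 0 ≤ (μ (Set.Ici N)).toReal := ENNReal.toReal_nonneg
    have hd4 : (2*C + ε' + 1) * δ = ε/4 := by
      rw [hδdef]; field_simp
    calc ∫ x, (U x - f x) ∂μ
        ≤ ∫ x, (2*ε' + Set.indicator (Set.Ici N) (fun _ => 2*C + ε') x) ∂μ :=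
          integral_mono_ae hintUf hintB hle
    _ = 2*ε' + (2*C + ε') * (μ (Set.Ici N)).toReal := hIB
    _ < ε := by
      have h8 : 2*ε' = ε/4 := by rw [hε'def]; ring
      have hp : (0:ℝ) < 2*C + ε' + 1 := by linarith
      have l1 : (2*C + ε') * (μ (Set.Ici N)).toReal ≤ (2*C + ε' + 1) * (μ (Set.Ici N)).toReal :=
        mul_le_mul_of_nonneg_right (by linarith) ht0
      have l2 : (2*C + ε' + 1) * (μ (Set.Ici N)).toReal < (2*C + ε' + 1) * δ :=
        mul_lt_mul_of_pos_left htail hp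
      linarith

end RobustFin
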